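/- arXiv:1510.07919 — 6 statements merged into one kernel-verified Lean document; each statement's English description precedes it below -/
import Mathlib

section
/- Let f be a valuation of a near polygon N with M_f ≥ 1. Then the set H_f of points of N with f-value strictly less than M_f is a hyperplane of N, i.e., a nonempty proper subset of the point set such that every line of N has either exactly one or all of its points in H_f. -/
/-- The collinearity graph of a point-line geometry whose lines are given as
sets of points: two points are adjacent when they are distinct and lie on a
common line. -/
def collGraph {P : Type*} (Lines : Set (Set P)) : SimpleGraph P where
  Adj x y := x ≠ y ∧ ∃ L ∈ Lines, x ∈ L ∧ y ∈ L
  symm := by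
    constructor
    rintro x y ⟨hxy, L, hL, hx, hy⟩
    exact ⟨hxy.symm, L, hL, hy, hx⟩
  loopless := by
    constructor
    rintro x ⟨h, -⟩
    exact h rfl

/-- A near `2d`-gon: a partial linear space (every line carries at least two
points, two distinct points lie on at most one common line) whose collinearity
graph is connected of diameter `d`, and in which for every point `x` and every
line `L` there is a unique point of `L` nearest to `x`.  A near hexagon is a
`NearPolygon P 3`, a near octagon is a `NearPolygon P 4`. -/
structure NearPolygon (P : Type*) (d : ℕ) where
  Lines : Set (Set P)
  two_pts : ∀ L ∈ Lines, ∃ x ∈ L, ∃ y ∈ L, x ≠ y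
  unique_line : ∀ L₁ ∈ Lines, ∀ L₂ ∈ Lines, ∀ x y : P,
    x ≠ y → x ∈ L₁ → y ∈ L₁ → x ∈ L₂ → y ∈ L₂ → L₁ = L₂
  connected : (collGraph Lines).Connected
  diam_le : ∀ x y : P, (collGraph Lines).dist x y ≤ d
  diam_eq : ∃ x y : P, (collGraph Lines).dist x y = d
  near : ∀ (x : P), ∀ L ∈ Lines, ∃! y, y ∈ L ∧
    ∀ z ∈ L, (collGraph Lines).dist x y ≤ (collGraph Lines).dist x z

/-- A near polygon has order `(s,t)` if every line is incident with exactly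
`s+1` points and every point is incident with exactly `t+1` lines. -/
def NearPolygon.hasOrder {P : Type*} {d : ℕ} (N : NearPolygon P d) (s t : ℕ) : Prop :=
  (∀ L ∈ N.Lines, L.ncard = s + 1) ∧
  (∀ x : P, {L | L ∈ N.Lines ∧ x ∈ L}.ncard = t + 1)

/-- A semi-valuation: every line `L` contains a unique point `xL` such that
every other point of `L` has value `f xL + 1`. -/
def IsSemiValuation {P : Type*} (Lines : Set (Set P)) (f : P → ℤ) : Prop :=
  ∀ L ∈ Lines, ∃! xL, xL ∈ L ∧ ∀ x ∈ L, x ≠ xL → f x = f xL + 1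

/-- A valuation: a semi-valuation whose minimum value is `0`. -/
def IsValuation {P : Type*} (Lines : Set (Set P)) (f : P → ℤ) : Prop :=
  IsSemiValuation Lines f ∧ (∀ x, 0 ≤ f x) ∧ (∃ x, f x = 0)

/-- `ι` realizes the geometry with lines `LQ` as a full isometrically embedded
subgeometry of the geometry with lines `LP` (lines being identified with their
point sets, fullness amounts to lines mapping onto lines). -/
structure IsFullIsomEmb {Q P : Type*} (LQ : Set (Set Q)) (LP : Set (Set P))
    (ι : Q → P) : Prop where
  inj : Function.Injective ι
  line_map : ∀ L ∈ LQ, ι '' L ∈ LP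
  isometric : ∀ x y : Q, (collGraph LP).dist (ι x) (ι y) = (collGraph LQ).dist x y

/-- The distance `d(x, P)` from a point `x` of the ambient geometry to the
point set of the embedded subgeometry. -/
noncomputable def distToSub {Q P : Type*} (LP : Set (Set P)) (ι : Q → P) (x : P) : ℕ :=
  sInf (Set.range fun z : Q => (collGraph LP).dist x (ι z))

/-- The function `f_x : y ↦ d(x, y) - d(x, P)` induced on the embedded
subgeometry by a point `x` of the ambient geometry. -/
noncomputable def inducedVal {Q P : Type*} (LP : Set (Set P)) (ι : Q → P) (x : P) :
    Q → ℤ :=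
  fun y => ((collGraph LP).dist x (ι y) : ℤ) - (distToSub LP ι x : ℤ)

/-- Two valuations are neighboring if `|f1 x - f2 x + ε| ≤ 1` for all `x`,
for some integer `ε`. -/
def Neighboring {P : Type*} (f1 f2 : P → ℤ) : Prop :=
  ∃ ε : ℤ, ∀ x, |f1 x - f2 x + ε| ≤ 1

/-- The semi-valuation `f3'` built from two neighboring valuations `f1, f2`
and a compatible `ε`. -/
def starFun {P : Type*} (f1 f2 : P → ℤ) (ε : ℤ) (x : P) : ℤ :=
  if f1 x = f2 x - ε then f1 x - 1 else max (f1 x) (f2 x - ε)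

/-- `StarRel f1 f2 f3` expresses `f1 * f2 = f3`: some `ε ∈ {-1,0,1}` witnesses
that `f1` and `f2` are neighboring, and, for every such `ε`, subtracting the
minimum value `m` of `f3' = starFun f1 f2 ε` from `f3'` yields `f3`. -/
def StarRel {P : Type*} (f1 f2 f3 : P → ℤ) : Prop :=
  (∃ ε ∈ ({-1, 0, 1} : Set ℤ), ∀ x, |f1 x - f2 x + ε| ≤ 1) ∧
  ∀ ε ∈ ({-1, 0, 1} : Set ℤ), (∀ x, |f1 x - f2 x + ε| ≤ 1) →
    ∃ m : ℤ, IsLeast (Set.range (starFun f1 f2 ε)) m ∧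
      ∀ x, f3 x = starFun f1 f2 ε x - m

/-- A subspace: together with two distinct collinear points it contains every
line through them. -/
def IsSubspace {P : Type*} (Lines : Set (Set P)) (X : Set P) : Prop :=
  ∀ L ∈ Lines, ∀ x ∈ L, ∀ y ∈ L, x ≠ y → x ∈ X → y ∈ X → L ⊆ X

/-- A convex subspace: a subspace containing every point on a shortest path
between any two of its points. -/
def IsConvexSubspace {P : Type*} (Lines : Set (Set P)) (X : Set P) : Prop :=
  IsSubspace Lines X ∧
  ∀ x ∈ X, ∀ y ∈ X, ∀ z : P,
    (collGraph Lines).dist x z + (collGraph Lines).dist z y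
      = (collGraph Lines).dist x y → z ∈ X

/-- A quad: a convex subspace of diameter `2` inducing (with the lines fully
contained in it) a nondegenerate generalized quadrangle. -/
def IsQuad {P : Type*} (Lines : Set (Set P)) (Q : Set P) : Prop :=
  IsConvexSubspace Lines Q ∧
  (∀ x ∈ Q, ∀ y ∈ Q, (collGraph Lines).dist x y ≤ 2) ∧
  (∃ x ∈ Q, ∃ y ∈ Q, (collGraph Lines).dist x y = 2) ∧
  (∀ x ∈ Q, ∀ L ∈ Lines, L ⊆ Q → x ∉ L →
    ∃! y, y ∈ L ∧ (collGraph Lines).Adj x y) ∧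
  (∀ x ∈ Q, ∃ L₁ ∈ Lines, ∃ L₂ ∈ Lines,
    L₁ ⊆ Q ∧ L₂ ⊆ Q ∧ x ∈ L₁ ∧ x ∈ L₂ ∧ L₁ ≠ L₂) ∧
  (∃ x ∈ Q, ∃ y ∈ Q, x ≠ y ∧ ¬ (collGraph Lines).Adj x y)

/-- A quad has order `(s,t')` if each of its lines has `s+1` points and each
of its points is on exactly `t'+1` lines contained in the quad. -/
def QuadHasOrder {P : Type*} (Lines : Set (Set P)) (Q : Set P) (s t' : ℕ) : Prop :=
  (∀ L ∈ Lines, L ⊆ Q → L.ncard = s + 1) ∧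
  (∀ x ∈ Q, {L | L ∈ Lines ∧ L ⊆ Q ∧ x ∈ L}.ncard = t' + 1)

/-- If `f` is a valuation of a near polygon `N` with maximum
value `M ≥ 1`, then `H_f = {x | f x < M}` is a hyperplane: a nonempty proper
subset of the point set such that every line has exactly one or all of its
points in it. -/
theorem hyperplane_of_valuation {P : Type*} {d : ℕ} (N : NearPolygon P d)
    (f : P → ℤ) (hf : IsValuation N.Lines f) (M : ℤ)
    (hM : IsGreatest (Set.range f) M) (hM1 : 1 ≤ M) :
    {x | f x < M}.Nonempty ∧ {x | f x < M} ≠ Set.univ ∧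
      ∀ L ∈ N.Lines, (∃! x, x ∈ L ∧ f x < M) ∨ (∀ x ∈ L, f x < M) := by
  obtain ⟨hsemi, hpos, x0, hx0⟩ := hf
  obtain ⟨⟨xM, hxM⟩, hub⟩ := hM
  refine ⟨⟨x0, by simp [hx0]; omega⟩, ?_, ?_⟩
  · intro h
    have : xM ∈ {x | f x < M} := h ▸ Set.mem_univ xM
    simp [hxM] at this
  · intro L hL
    obtain ⟨xL, ⟨hxLL, hxLval⟩, huniq⟩ := hsemi L hL
    have hxLle : f xL + 1 ≤ M := by
      obtain ⟨a, ha, b, hb, hab⟩ := N.two_pts L hL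
      rcases eq_or_ne a xL with rfl | hne
      · have := hxLval b hb (fun h => hab h.symm)
        have := hub ⟨b, rfl⟩
        omega
      · have := hxLval a ha hne
        have := hub ⟨a, rfl⟩
        omega
    rcases lt_or_eq_of_le hxLle with hlt | heq
    · right
      intro x hx
      rcases eq_or_ne x xL with rfl | hne
      · omega
      · have := hxLval x hx hne; omega
    · left
      refine ⟨xL, ⟨hxLL, by omega⟩, ?_⟩
      rintro y ⟨hyL, hyv⟩
      by_contra hne
      have := hxLval y hyL hne
      omega
end

section
/- Let N = (P, L) be a near polygon that is a full isometrically embedded subgeometry of a near polygon N'. Then for every point x of N', the function f_x : P → ℤ defined by f_x(y) = d_{N'}(x,y) − d_{N'}(x,P), where d_{N'}(x,P) denotes the minimum of d_{N'}(x,y) over y ∈ P, is a valuation of N. -/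
/-- If a near polygon `N` is a full isometrically embedded
subgeometry of a near polygon `N'`, then for every point `x` of `N'` the
function `f_x : y ↦ d_{N'}(x,y) - d_{N'}(x,P)` is a valuation of `N`. -/
theorem inducedVal_isValuation {Q P : Type*} {dQ dP : ℕ}
    (N : NearPolygon Q dQ) (N' : NearPolygon P dP) (ι : Q → P)
    (emb : IsFullIsomEmb N.Lines N'.Lines ι) (x : P) :
    IsValuation N.Lines (inducedVal N'.Lines ι x) := by

  classical
  have hQne : Nonempty Q := N.connected.nonempty
  -- the minimum distance is attained
  have hmem : distToSub N'.Lines ι x ∈ Set.range fun z : Q => (collGraph N'.Lines).dist x (ι z) :=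
    Nat.sInf_mem (Set.range_nonempty _)
  obtain ⟨z0, hz0⟩ := hmem
  refine ⟨?_, ?_, ⟨z0, ?_⟩⟩
  · -- semi-valuation
    intro L hL
    have hL' : ι '' L ∈ N'.Lines := emb.line_map L hL
    obtain ⟨y, ⟨hyL, hmin⟩, huniq⟩ := N'.near x (ι '' L) hL'
    obtain ⟨w, hwL, hw⟩ := hyL
    refine ⟨w, ⟨hwL, ?_⟩, ?_⟩
    · intro u huL hun
      have hiu : ι u ∈ ι '' L := ⟨u, huL, rfl⟩
      have hne : ι u ≠ y := by
        rw [← hw]; exact fun h => hun (emb.inj h)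
      have hadj : (collGraph N'.Lines).Adj y (ι u) :=
        ⟨hne.symm, ι '' L, hL', by rw [← hw]; exact ⟨w, hwL, rfl⟩, hiu⟩
      have h1 : (collGraph N'.Lines).dist y (ι u) = 1 :=
        (SimpleGraph.dist_eq_one_iff_adj).2 hadj
      have hle : (collGraph N'.Lines).dist x (ι u)
          ≤ (collGraph N'.Lines).dist x y + 1 := by
        have := N'.connected.dist_triangle (u := x) (v := y) (w := ι u)
        omega
      have hge : (collGraph N'.Lines).dist x y ≤ (collGraph N'.Lines).dist x (ι u) :=
        hmin _ hiu
      have hne' : (collGraph N'.Lines).dist x (ι u) ≠ (collGraph N'.Lines).dist x y := by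
        intro heq
        apply hne
        apply huniq
        refine ⟨hiu, ?_⟩
        intro v hv
        rw [heq]; exact hmin v hv
      have heq : (collGraph N'.Lines).dist x (ι u)
          = (collGraph N'.Lines).dist x (ι w) + 1 := by
        rw [hw]; omega
      simp only [inducedVal, heq]
      push_cast
      ring
    · -- uniqueness
      rintro w' ⟨hw'L, hw'⟩
      by_contra hne
      have h1 := hw' w hwL (fun h => hne h.symm)
      have h2 : inducedVal N'.Lines ι x w' = inducedVal N'.Lines ι x w + 1 := by
        -- w also has the property? No: derive from w' ≠ w both ways
        have hiw' : ι w' ∈ ι '' L := ⟨w', hw'L, rfl⟩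
        by_cases hyw : ι w' = y
        · exact absurd (emb.inj (hyw.trans hw.symm)) hne
        · have hadj : (collGraph N'.Lines).Adj y (ι w') :=
            ⟨fun h => hyw h.symm, ι '' L, hL', by rw [← hw]; exact ⟨w, hwL, rfl⟩, hiw'⟩
          have hd1 : (collGraph N'.Lines).dist y (ι w') = 1 :=
            (SimpleGraph.dist_eq_one_iff_adj).2 hadj
          have hle : (collGraph N'.Lines).dist x (ι w')
              ≤ (collGraph N'.Lines).dist x y + 1 := by
            have := N'.connected.dist_triangle (u := x) (v := y) (w := ι w')
            omega
          have hge : (collGraph N'.Lines).dist x y ≤ (collGraph N'.Lines).dist x (ι w') :=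
            hmin _ hiw'
          have hne2 : (collGraph N'.Lines).dist x (ι w') ≠ (collGraph N'.Lines).dist x y := by
            intro heq
            exact hyw (huniq (ι w') ⟨hiw', fun v hv => heq ▸ hmin v hv⟩)
          have heq : (collGraph N'.Lines).dist x (ι w')
              = (collGraph N'.Lines).dist x (ι w) + 1 := by rw [hw]; omega
          simp only [inducedVal, heq]
          push_cast
          ring
      omega
  · intro yq
    have : distToSub N'.Lines ι x ≤ (collGraph N'.Lines).dist x (ι yq) :=
      Nat.sInf_le ⟨yq, rfl⟩
    simp only [inducedVal]
    omega
  · simp only [inducedVal, hz0]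
    ring
end

section
/- Let N = (P, L) be a near polygon that is a full isometrically embedded subgeometry of a near polygon N' in which every line is incident with exactly three points, and for every point x of N' let f_x be the valuation of N defined by f_x(y) = d_{N'}(x,y) − d_{N'}(x,P). If {x1, x2, x3} is a line of N', then f_{x1} * f_{x2} = f_{x3}; in particular, if two of f_{x1}, f_{x2}, f_{x3} coincide then all three are equal. -/
section Auxiliary

/-- On any line of a near polygon, there is a point `u` such that every other
point of the line is at distance exactly `dist x u + 1` from `x`. -/
lemma nearPattern {P : Type*} {d : ℕ} (N' : NearPolygon P d)
    {L : Set P} (hL : L ∈ N'.Lines) (x : P) :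
    ∃ u ∈ L, ∀ v ∈ L, v ≠ u →
      (collGraph N'.Lines).dist x v = (collGraph N'.Lines).dist x u + 1 := by
  obtain ⟨u, ⟨huL, hmin⟩, huniq⟩ := N'.near x L hL
  refine ⟨u, huL, fun v hvL hvu => ?_⟩
  have hadj : (collGraph N'.Lines).Adj u v := ⟨fun h => hvu h.symm, L, hL, huL, hvL⟩
  have htri : (collGraph N'.Lines).dist x v ≤
      (collGraph N'.Lines).dist x u + (collGraph N'.Lines).dist u v :=
    N'.connected.dist_triangle
  have hone : (collGraph N'.Lines).dist u v = 1 := SimpleGraph.dist_eq_one_iff_adj.2 hadj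
  have hle : (collGraph N'.Lines).dist x u ≤ (collGraph N'.Lines).dist x v := hmin v hvL
  by_cases heq : (collGraph N'.Lines).dist x v = (collGraph N'.Lines).dist x u
  · exact absurd (huniq v ⟨hvL, fun z hz => le_trans (le_of_eq heq) (hmin z hz)⟩) hvu
  · omega

/-- Trichotomy for the distances from a point to the three points of a line. -/
lemma lineTri {P : Type*} {d : ℕ} (N' : NearPolygon P d) {x1 x2 x3 : P}
    (h12 : x1 ≠ x2) (h13 : x1 ≠ x3) (h23 : x2 ≠ x3)
    (hL : ({x1, x2, x3} : Set P) ∈ N'.Lines) (p : P) :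
    ((collGraph N'.Lines).dist p x2 = (collGraph N'.Lines).dist p x1 + 1 ∧
     (collGraph N'.Lines).dist p x3 = (collGraph N'.Lines).dist p x1 + 1) ∨
    ((collGraph N'.Lines).dist p x1 = (collGraph N'.Lines).dist p x2 + 1 ∧
     (collGraph N'.Lines).dist p x3 = (collGraph N'.Lines).dist p x2 + 1) ∨
    ((collGraph N'.Lines).dist p x1 = (collGraph N'.Lines).dist p x3 + 1 ∧
     (collGraph N'.Lines).dist p x2 = (collGraph N'.Lines).dist p x3 + 1) := by
  obtain ⟨u, huL, hpat⟩ := nearPattern N' hL p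
  have hm1 : x1 ∈ ({x1, x2, x3} : Set P) := by simp
  have hm2 : x2 ∈ ({x1, x2, x3} : Set P) := by simp
  have hm3 : x3 ∈ ({x1, x2, x3} : Set P) := by simp
  simp only [Set.mem_insert_iff, Set.mem_singleton_iff] at huL
  rcases huL with rfl | rfl | rfl
  · exact Or.inl ⟨hpat x2 hm2 h12.symm, hpat x3 hm3 h13.symm⟩
  · exact Or.inr (Or.inl ⟨hpat x1 hm1 h12, hpat x3 hm3 h23.symm⟩)
  · exact Or.inr (Or.inr ⟨hpat x1 hm1 h13, hpat x2 hm2 h23⟩)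

/-- A function constant on every line of a near polygon is constant. -/
lemma const_of_line_const {Q : Type*} {dQ : ℕ} (N : NearPolygon Q dQ) (D : Q → ℤ)
    (hline : ∀ L ∈ N.Lines, ∀ u ∈ L, ∀ v ∈ L, D u = D v) (u v : Q) : D u = D v := by
  have hadj : ∀ a b : Q, (collGraph N.Lines).Adj a b → D a = D b := by
    rintro a b ⟨-, L, hLm, ha, hb⟩
    exact hline L hLm a ha b hb
  suffices h : ∀ {a b : Q}, (collGraph N.Lines).Walk a b → D a = D b by
    obtain ⟨w⟩ := N.connected.preconnected u v
    exact h w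
  intro a b w
  induction w with
  | nil => rfl
  | cons h _ ih => exact (hadj _ _ h).trans ih

/-- If the difference of distance functions to two fixed points takes only two
consecutive values on the embedded subgeometry, it is constant on each line. -/
lemma line_diff_const {Q P : Type*} {dQ dP : ℕ}
    (N : NearPolygon Q dQ) (N' : NearPolygon P dP) (ι : Q → P)
    (emb : IsFullIsomEmb N.Lines N'.Lines ι) (x1 x2 : P) (a : ℤ)
    (H : ∀ y : Q, (((collGraph N'.Lines).dist x1 (ι y) : ℤ) -
           ((collGraph N'.Lines).dist x2 (ι y) : ℤ) = a) ∨
         (((collGraph N'.Lines).dist x1 (ι y) : ℤ) -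
           ((collGraph N'.Lines).dist x2 (ι y) : ℤ) = a + 1))
    {L : Set Q} (hLm : L ∈ N.Lines) {u : Q} (hu : u ∈ L) {v : Q} (hv : v ∈ L) :
    ((collGraph N'.Lines).dist x1 (ι u) : ℤ) - ((collGraph N'.Lines).dist x2 (ι u) : ℤ)
      = ((collGraph N'.Lines).dist x1 (ι v) : ℤ) -
        ((collGraph N'.Lines).dist x2 (ι v) : ℤ) := by
  have hL' : ι '' L ∈ N'.Lines := emb.line_map L hLm
  obtain ⟨p1', hp1', hpat1⟩ := nearPattern N' hL' x1
  obtain ⟨p2', hp2', hpat2⟩ := nearPattern N' hL' x2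
  obtain ⟨p1, hp1, rfl⟩ := hp1'
  obtain ⟨p2, hp2, rfl⟩ := hp2'
  by_cases hpp : p1 = p2
  · subst hpp
    have key : ∀ w ∈ L,
        ((collGraph N'.Lines).dist x1 (ι w) : ℤ) - ((collGraph N'.Lines).dist x2 (ι w) : ℤ)
          = ((collGraph N'.Lines).dist x1 (ι p1) : ℤ) -
            ((collGraph N'.Lines).dist x2 (ι p1) : ℤ) := by
      intro w hw
      by_cases hwp : w = p1
      · subst hwp; rfl
      · have hne : ι w ≠ ι p1 := fun h => hwp (emb.inj h)
        have a1 := hpat1 (ι w) ⟨w, hw, rfl⟩ hne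
        have a2 := hpat2 (ι w) ⟨w, hw, rfl⟩ hne
        omega
    rw [key u hu, key v hv]
  · exfalso
    have hne12 : ι p1 ≠ ι p2 := fun h => hpp (emb.inj h)
    have a1 := hpat1 (ι p2) ⟨p2, hp2, rfl⟩ (fun h => hne12 h.symm)
    have a2 := hpat2 (ι p1) ⟨p1, hp1, rfl⟩ hne12
    have b1 := H p1
    have b2 := H p2
    omega

end Auxiliary

/-- If a near polygon `N` is a full isometrically embedded
subgeometry of a near polygon `N'` with three points on each line, and
`{x1, x2, x3}` is a line of `N'`, then `f_{x1} * f_{x2} = f_{x3}`; in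
particular, if two of `f_{x1}, f_{x2}, f_{x3}` coincide then all three are
equal. -/
theorem inducedVal_star_line {Q P : Type*} {dQ dP : ℕ}
    (N : NearPolygon Q dQ) (N' : NearPolygon P dP) (ι : Q → P)
    (emb : IsFullIsomEmb N.Lines N'.Lines ι)
    (h3 : ∀ L ∈ N'.Lines, L.ncard = 3)
    (x1 x2 x3 : P) (h12 : x1 ≠ x2) (h13 : x1 ≠ x3) (h23 : x2 ≠ x3)
    (hL : ({x1, x2, x3} : Set P) ∈ N'.Lines) :
    StarRel (inducedVal N'.Lines ι x1) (inducedVal N'.Lines ι x2)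
        (inducedVal N'.Lines ι x3) ∧
      ((inducedVal N'.Lines ι x1 = inducedVal N'.Lines ι x2 ∨
        inducedVal N'.Lines ι x1 = inducedVal N'.Lines ι x3 ∨
        inducedVal N'.Lines ι x2 = inducedVal N'.Lines ι x3) →
        inducedVal N'.Lines ι x1 = inducedVal N'.Lines ι x2 ∧
        inducedVal N'.Lines ι x2 = inducedVal N'.Lines ι x3) := by
  classical
  haveI : Nonempty Q := N.connected.nonempty
  set g1 : Q → ℕ := fun y => (collGraph N'.Lines).dist x1 (ι y) with hg1def
  set g2 : Q → ℕ := fun y => (collGraph N'.Lines).dist x2 (ι y) with hg2def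
  set g3 : Q → ℕ := fun y => (collGraph N'.Lines).dist x3 (ι y) with hg3def
  set m1 : ℕ := distToSub N'.Lines ι x1 with hm1def
  set m2 : ℕ := distToSub N'.Lines ι x2 with hm2def
  set m3 : ℕ := distToSub N'.Lines ι x3 with hm3def
  have hm1le : ∀ y, m1 ≤ g1 y := fun y => Nat.sInf_le ⟨y, rfl⟩
  have hm2le : ∀ y, m2 ≤ g2 y := fun y => Nat.sInf_le ⟨y, rfl⟩
  have hm3le : ∀ y, m3 ≤ g3 y := fun y => Nat.sInf_le ⟨y, rfl⟩
  have hm1ex : ∃ y, g1 y = m1 := by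
    obtain ⟨y, hy⟩ :=
      Nat.sInf_mem (Set.range_nonempty (fun z : Q => (collGraph N'.Lines).dist x1 (ι z)))
    exact ⟨y, hy⟩
  have hm2ex : ∃ y, g2 y = m2 := by
    obtain ⟨y, hy⟩ :=
      Nat.sInf_mem (Set.range_nonempty (fun z : Q => (collGraph N'.Lines).dist x2 (ι z)))
    exact ⟨y, hy⟩
  have hm3ex : ∃ y, g3 y = m3 := by
    obtain ⟨y, hy⟩ :=
      Nat.sInf_mem (Set.range_nonempty (fun z : Q => (collGraph N'.Lines).dist x3 (ι z)))
    exact ⟨y, hy⟩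
  have tri : ∀ y : Q,
      (g2 y = g1 y + 1 ∧ g3 y = g1 y + 1) ∨
      (g1 y = g2 y + 1 ∧ g3 y = g2 y + 1) ∨
      (g1 y = g3 y + 1 ∧ g2 y = g3 y + 1) := by
    intro y
    have h := lineTri N' h12 h13 h23 hL (ι y)
    rw [SimpleGraph.dist_comm (u := ι y) (v := x1), SimpleGraph.dist_comm (u := ι y) (v := x2),
      SimpleGraph.dist_comm (u := ι y) (v := x3)] at h
    exact h
  -- bounds between the minima
  have hδ1 : m1 ≤ m2 + 1 := by
    obtain ⟨y2, hy2⟩ := hm2ex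
    have h := hm1le y2
    have t := tri y2
    omega
  have hδ2 : m2 ≤ m1 + 1 := by
    obtain ⟨y1, hy1⟩ := hm1ex
    have h := hm2le y1
    have t := tri y1
    omega
  -- the key consequence of `g1 - g2` being globally constant
  have keyconst : (∀ y z : Q, (g1 y : ℤ) - g2 y = (g1 z : ℤ) - g2 z) →
      (∀ x, inducedVal N'.Lines ι x1 x = inducedVal N'.Lines ι x2 x) ∧
      (∀ x, inducedVal N'.Lines ι x3 x = inducedVal N'.Lines ι x1 x) := by
    intro hc
    obtain ⟨y1, hy1⟩ := hm1ex
    obtain ⟨y2, hy2⟩ := hm2ex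
    obtain ⟨y3, hy3⟩ := hm3ex
    have hk : ∀ y, (g1 y : ℤ) - g2 y = (m1 : ℤ) - m2 := by
      intro y
      have h1 := hc y y1
      have h2 := hc y y2
      have b1 := hm2le y1
      have b2 := hm1le y2
      omega
    have h3c : ∀ y z : Q, (g3 y : ℤ) - g1 y = (g3 z : ℤ) - g1 z := by
      intro y z
      have ty := tri y
      have tz := tri z
      have hky := hk y
      have hkz := hk z
      omega
    have hm31 : (m3 : ℤ) - m1 = (g3 y1 : ℤ) - g1 y1 := by
      have h1 := h3c y3 y1
      have b1 := hm3le y1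
      have b2 := hm1le y3
      omega
    constructor
    · intro x
      have hkx := hk x
      have E1 : inducedVal N'.Lines ι x1 x = (g1 x : ℤ) - m1 := rfl
      have E2 : inducedVal N'.Lines ι x2 x = (g2 x : ℤ) - m2 := rfl
      omega
    · intro x
      have h1 := h3c x y1
      have E1 : inducedVal N'.Lines ι x1 x = (g1 x : ℤ) - m1 := rfl
      have E3 : inducedVal N'.Lines ι x3 x = (g3 x : ℤ) - m3 := rfl
      omega
  -- the main clause of StarRel
  have main : ∀ ε ∈ ({-1, 0, 1} : Set ℤ),
      (∀ x, |inducedVal N'.Lines ι x1 x - inducedVal N'.Lines ι x2 x + ε| ≤ 1) →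
      ∃ m : ℤ, IsLeast (Set.range
          (starFun (inducedVal N'.Lines ι x1) (inducedVal N'.Lines ι x2) ε)) m ∧
        ∀ x, inducedVal N'.Lines ι x3 x =
          starFun (inducedVal N'.Lines ι x1) (inducedVal N'.Lines ι x2) ε x - m := by
    intro ε _ hεadm
    by_cases hceq : ε = (m1 : ℤ) - (m2 : ℤ)
    · -- canonical epsilon
      have hstar0 : ∀ y, starFun (inducedVal N'.Lines ι x1) (inducedVal N'.Lines ι x2) ε y
          = (g3 y : ℤ) - m1 := by
        intro y
        have t := tri y
        have E1 : inducedVal N'.Lines ι x1 y = (g1 y : ℤ) - m1 := rfl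
        have E2 : inducedVal N'.Lines ι x2 y = (g2 y : ℤ) - m2 := rfl
        simp only [starFun]
        split_ifs with hcnd
        · omega
        · rcases le_total (inducedVal N'.Lines ι x1 y) (inducedVal N'.Lines ι x2 y - ε)
            with h | h
          · rw [max_eq_right h]; omega
          · rw [max_eq_left h]; omega
      obtain ⟨y3, hy3⟩ := hm3ex
      refine ⟨(m3 : ℤ) - m1, ⟨⟨y3, ?_⟩, ?_⟩, ?_⟩
      · rw [hstar0 y3]; omega
      · rintro z ⟨y, rfl⟩
        rw [hstar0 y]
        have h := hm3le y
        omega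
      · intro x
        rw [hstar0 x]
        have E3 : inducedVal N'.Lines ι x3 x = (g3 x : ℤ) - m3 := rfl
        omega
    · -- non-canonical epsilon: g1 - g2 is globally constant
      obtain ⟨aa, ha⟩ : ∃ a : ℤ, ∀ y : Q,
          ((g1 y : ℤ) - g2 y = a) ∨ ((g1 y : ℤ) - g2 y = a + 1) := by
        rcases lt_or_gt_of_ne hceq with h | h
        · refine ⟨0, fun y => ?_⟩
          have t := tri y
          have hb : |(((g1 y : ℤ) - m1) - ((g2 y : ℤ) - m2) + ε)| ≤ 1 := hεadm y
          rw [abs_le] at hb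
          omega
        · refine ⟨-1, fun y => ?_⟩
          have t := tri y
          have hb : |(((g1 y : ℤ) - m1) - ((g2 y : ℤ) - m2) + ε)| ≤ 1 := hεadm y
          rw [abs_le] at hb
          omega
      have hconst : ∀ u v : Q, (g1 u : ℤ) - g2 u = (g1 v : ℤ) - g2 v := by
        intro u v
        exact const_of_line_const N (fun y => (g1 y : ℤ) - g2 y)
          (fun L hLm p hp q hq => line_diff_const N N' ι emb x1 x2 aa ha hLm hp hq) u v
      obtain ⟨hf12, hf31⟩ := keyconst hconst
      set s : ℤ := if ε = 0 then -1 else max 0 (-ε) with hsdef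
      obtain ⟨y1, hy1⟩ := hm1ex
      have hstar : ∀ y, starFun (inducedVal N'.Lines ι x1) (inducedVal N'.Lines ι x2) ε y
          = inducedVal N'.Lines ι x1 y + s := by
        intro y
        have h12y := hf12 y
        simp only [starFun]
        split_ifs with hcnd
        · have hε0 : ε = 0 := by omega
          rw [hsdef, if_pos hε0]; omega
        · have hε0 : ε ≠ 0 := by intro h; exact hcnd (by omega)
          rw [hsdef, if_neg hε0]
          rcases le_total ε 0 with hle | hle
          · rw [max_eq_right (by omega), max_eq_right (by omega)]; omega
          · rw [max_eq_left (by omega), max_eq_left (by omega)]; omega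
      refine ⟨s, ⟨⟨y1, ?_⟩, ?_⟩, ?_⟩
      · rw [hstar y1]
        have E1 : inducedVal N'.Lines ι x1 y1 = (g1 y1 : ℤ) - m1 := rfl
        omega
      · rintro z ⟨y, rfl⟩
        rw [hstar y]
        have E1 : inducedVal N'.Lines ι x1 y = (g1 y : ℤ) - m1 := rfl
        have h := hm1le y
        omega
      · intro x
        rw [hstar x, hf31 x]; ring
  -- the "in particular" clause
  have part2 : (inducedVal N'.Lines ι x1 = inducedVal N'.Lines ι x2 ∨
        inducedVal N'.Lines ι x1 = inducedVal N'.Lines ι x3 ∨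
        inducedVal N'.Lines ι x2 = inducedVal N'.Lines ι x3) →
      inducedVal N'.Lines ι x1 = inducedVal N'.Lines ι x2 ∧
      inducedVal N'.Lines ι x2 = inducedVal N'.Lines ι x3 := by
    intro hyp
    have hcc : ∀ y z : Q, (g1 y : ℤ) - g2 y = (g1 z : ℤ) - g2 z := by
      rcases hyp with h | h | h
      · intro y z
        have hy := congrFun h y
        have hz := congrFun h z
        have E1y : inducedVal N'.Lines ι x1 y = (g1 y : ℤ) - m1 := rfl
        have E2y : inducedVal N'.Lines ι x2 y = (g2 y : ℤ) - m2 := rfl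
        have E1z : inducedVal N'.Lines ι x1 z = (g1 z : ℤ) - m1 := rfl
        have E2z : inducedVal N'.Lines ι x2 z = (g2 z : ℤ) - m2 := rfl
        omega
      · intro y z
        have hy := congrFun h y
        have hz := congrFun h z
        have E1y : inducedVal N'.Lines ι x1 y = (g1 y : ℤ) - m1 := rfl
        have E3y : inducedVal N'.Lines ι x3 y = (g3 y : ℤ) - m3 := rfl
        have E1z : inducedVal N'.Lines ι x1 z = (g1 z : ℤ) - m1 := rfl
        have E3z : inducedVal N'.Lines ι x3 z = (g3 z : ℤ) - m3 := rfl
        have ty := tri y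
        have tz := tri z
        omega
      · intro y z
        have hy := congrFun h y
        have hz := congrFun h z
        have E2y : inducedVal N'.Lines ι x2 y = (g2 y : ℤ) - m2 := rfl
        have E3y : inducedVal N'.Lines ι x3 y = (g3 y : ℤ) - m3 := rfl
        have E2z : inducedVal N'.Lines ι x2 z = (g2 z : ℤ) - m2 := rfl
        have E3z : inducedVal N'.Lines ι x3 z = (g3 z : ℤ) - m3 := rfl
        have ty := tri y
        have tz := tri z
        omega
    obtain ⟨hf12, hf31⟩ := keyconst hcc
    exact ⟨funext hf12, funext fun x => (hf12 x).symm.trans (hf31 x).symm⟩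
  refine ⟨⟨⟨(m1 : ℤ) - m2, ?_, ?_⟩, main⟩, part2⟩
  · simp only [Set.mem_insert_iff, Set.mem_singleton_iff]
    omega
  · intro y
    have t := tri y
    have E1 : inducedVal N'.Lines ι x1 y = (g1 y : ℤ) - m1 := rfl
    have E2 : inducedVal N'.Lines ι x2 y = (g2 y : ℤ) - m2 := rfl
    rw [abs_le]
    omega
end

section
/- Let N be a near polygon with exactly three points on every line, let f1 and f2 be neighboring valuations of N, and let f3 = f1 * f2. Then: (i) f2 * f1 = f1 * f2 = f3; (ii) f1 and f3 are neighboring valuations and f1 * f3 = f2; (iii) f2 and f3 are neighboring valuations and f2 * f3 = f1. Moreover, if f1 = f2 then f3 = f1 = f2, regardless of the choice of ε ∈ {−1,0,1}. -/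
namespace StarAux

variable {P : Type*}

lemma starFun_cases (f1 f2 : P → ℤ) (ε : ℤ) (x : P) (h : |f1 x - f2 x + ε| ≤ 1) :
    (f1 x - f2 x + ε = 0 ∧ starFun f1 f2 ε x = f1 x - 1) ∨
    (f1 x - f2 x + ε = 1 ∧ starFun f1 f2 ε x = f1 x) ∨
    (f1 x - f2 x + ε = -1 ∧ starFun f1 f2 ε x = f1 x + 1) := by
  rw [abs_le] at h
  unfold starFun
  by_cases hc : f1 x = f2 x - ε
  · exact Or.inl ⟨by omega, by rw [if_pos hc]⟩
  · have h1 : f1 x - f2 x + ε = 1 ∨ f1 x - f2 x + ε = -1 := by omega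
    rcases h1 with h1 | h1
    · exact Or.inr (Or.inl ⟨h1, by rw [if_neg hc, max_eq_left (by omega)]⟩)
    · exact Or.inr (Or.inr ⟨h1, by rw [if_neg hc, max_eq_right (by omega : f1 x ≤ f2 x - ε)]; omega⟩)

lemma semival_of_exists {Lines : Set (Set P)} {f : P → ℤ}
    (h : ∀ L ∈ Lines, ∃ xL ∈ L, ∀ x ∈ L, x ≠ xL → f x = f xL + 1) :
    IsSemiValuation Lines f := by
  intro L hL
  obtain ⟨p, hp, hprop⟩ := h L hL
  refine ⟨p, ⟨hp, hprop⟩, ?_⟩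
  rintro q ⟨hq, hqprop⟩
  by_contra hne
  have h1 := hprop q hq hne
  have h2 := hqprop p hp (Ne.symm hne)
  omega

lemma line_min {Lines : Set (Set P)} {f : P → ℤ} (hf : IsSemiValuation Lines f)
    {L : Set P} (hL : L ∈ Lines) : ∃ p ∈ L, ∀ x ∈ L, x ≠ p → f x = f p + 1 := by
  obtain ⟨p, ⟨hp, hprop⟩, -⟩ := hf L hL
  exact ⟨p, hp, hprop⟩

lemma semival_congr_shift {Lines : Set (Set P)} {g f : P → ℤ}
    (hg : IsSemiValuation Lines g) {c : ℤ}
    (h : ∀ x, f x = g x - c) : IsSemiValuation Lines f := by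
  apply semival_of_exists; intro L hL
  obtain ⟨p, hp, hprop⟩ := line_min hg hL
  exact ⟨p, hp, fun x hx hxp => by
    have := hprop x hx hxp; have := h x; have := h p; omega⟩

lemma const_of_conn {Lines : Set (Set P)} (hconn : (collGraph Lines).Connected)
    {F : P → ℤ} (h : ∀ L ∈ Lines, ∀ x ∈ L, ∀ y ∈ L, F x = F y) :
    ∀ x y, F x = F y := by
  have key : ∀ x y : P, (collGraph Lines).Adj x y → F x = F y := by
    rintro x y ⟨hne, L, hL, hx, hy⟩
    exact h L hL x hx y hy
  intro x y
  obtain ⟨w⟩ := hconn.preconnected x y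
  induction w with
  | nil => rfl
  | cons h' w ih => exact (key _ _ h').trans ih

lemma diff_const {Lines : Set (Set P)} (hconn : (collGraph Lines).Connected)
    {u v : P → ℤ} (hu : IsSemiValuation Lines u) (hv : IsSemiValuation Lines v)
    (c : ℤ) (hval : ∀ x, u x - v x = c ∨ u x - v x = c + 1) :
    ∀ x y, u x - v x = u y - v y := by
  apply const_of_conn hconn (F := fun x => u x - v x)
  intro L hL
  obtain ⟨p, hp, hpu⟩ := line_min hu hL
  obtain ⟨q, hq, hqv⟩ := line_min hv hL
  have hpq : p = q := by
    by_contra hne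
    have h1 := hpu q hq (Ne.symm hne)
    have h2 := hqv p hp hne
    have h3 := hval p; have h4 := hval q
    omega
  subst hpq
  intro x hx y hy
  by_cases hxp : x = p <;> by_cases hyp : y = p
  · rw [hxp, hyp]
  · have := hpu y hy hyp; have := hqv y hy hyp; rw [hxp]; omega
  · have := hpu x hx hxp; have := hqv x hx hxp; rw [hyp]; omega
  · have := hpu x hx hxp; have := hqv x hx hxp
    have := hpu y hy hyp; have := hqv y hy hyp; omega

lemma diff_const_of_two_eps {Lines : Set (Set P)} (hconn : (collGraph Lines).Connected)
    {u v : P → ℤ} (hu : IsSemiValuation Lines u) (hv : IsSemiValuation Lines v)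
    {ε ε' : ℤ} (hne : ε ≠ ε')
    (h1 : ∀ x, |u x - v x + ε| ≤ 1) (h2 : ∀ x, |u x - v x + ε'| ≤ 1) :
    ∀ x y, u x - v x = u y - v y := by
  wlog hlt : ε < ε' generalizing ε ε' with H
  · exact H hne.symm h2 h1 (by omega)
  by_cases hgap : ε' = ε + 1
  · subst hgap
    refine diff_const hconn hu hv (-1 - ε) ?_
    intro x
    have ha := h1 x; have hb := h2 x; rw [abs_le] at ha hb; omega
  · have hx : ∀ x, u x - v x = -1 - ε := by
      intro x
      have ha := h1 x; have hb := h2 x; rw [abs_le] at ha hb; omega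
    intro x y; rw [hx x, hx y]

lemma eq_of_diff_const {u v : P → ℤ} (hu0 : ∀ x, 0 ≤ u x) (hu0' : ∃ x, u x = 0)
    (hv0 : ∀ x, 0 ≤ v x) (hv0' : ∃ x, v x = 0)
    (hc : ∀ x y, u x - v x = u y - v y) : u = v := by
  funext x
  obtain ⟨a, ha⟩ := hu0'; obtain ⟨b, hb⟩ := hv0'
  have h1 := hc x a; have h2 := hc x b
  have := hu0 b; have := hv0 a
  omega

lemma starFun_semival {Lines : Set (Set P)}
    (h3 : ∀ L ∈ Lines, L.ncard = 3)
    {f1 f2 : P → ℤ} (hf1 : IsSemiValuation Lines f1) (hf2 : IsSemiValuation Lines f2)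
    {ε : ℤ} (hε : ∀ x, |f1 x - f2 x + ε| ≤ 1) :
    IsSemiValuation Lines (starFun f1 f2 ε) := by
  apply semival_of_exists
  intro L hL
  obtain ⟨p, hp, hpu⟩ := line_min hf1 hL
  obtain ⟨q, hq, hqv⟩ := line_min hf2 hL
  by_cases hpq : p = q
  · subst hpq
    refine ⟨p, hp, ?_⟩
    intro x hx hxp
    have h1 := hpu x hx hxp
    have h2 := hqv x hx hxp
    rcases starFun_cases f1 f2 ε x (hε x) with ⟨e1, e2⟩ | ⟨e1, e2⟩ | ⟨e1, e2⟩ <;>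
      rcases starFun_cases f1 f2 ε p (hε p) with ⟨e3, e4⟩ | ⟨e3, e4⟩ | ⟨e3, e4⟩ <;>
      omega
  · have h1q := hpu q hq (Ne.symm hpq)
    have h2p := hqv p hp hpq
    have hεp := hε p; have hεq := hε q
    rw [abs_le] at hεp hεq
    obtain ⟨r, hrL, hrp, hrq⟩ : ∃ r ∈ L, r ≠ p ∧ r ≠ q := by
      by_contra hcon
      push_neg at hcon
      have hsub : L ⊆ {p, q} := by
        intro x hx
        by_cases hxp : x = p
        · exact Or.inl hxp
        · exact Or.inr (hcon x hx hxp)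
      have hle := Set.ncard_le_ncard hsub ((Set.finite_singleton q).insert p)
      have h2 : ({p, q} : Set P).ncard ≤ 2 :=
        le_trans (Set.ncard_insert_le p {q}) (by simp)
      have := h3 L hL
      omega
    have hfin : L.Finite := Set.finite_of_ncard_ne_zero (by rw [h3 L hL]; norm_num)
    have hLeq : ({p, q, r} : Set P) = L := by
      apply Set.eq_of_subset_of_ncard_le
      · intro x hx
        rcases hx with rfl | rfl | rfl
        · exact hp
        · exact hq
        · exact hrL
      · rw [h3 L hL]
        rw [Set.ncard_eq_three.mpr ⟨p, q, r, hpq, Ne.symm hrp, Ne.symm hrq, rfl⟩]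
      · exact hfin
    have h1r := hpu r hrL hrp
    have h2r := hqv r hrL hrq
    refine ⟨r, hrL, ?_⟩
    intro x hx hxr
    have hx3 : x = p ∨ x = q ∨ x = r := by rw [← hLeq] at hx; simpa using hx
    rcases starFun_cases f1 f2 ε r (hε r) with ⟨e1, e2⟩ | ⟨e1, e2⟩ | ⟨e1, e2⟩ <;>
      rcases hx3 with rfl | rfl | rfl <;>
      first
        | exact absurd rfl hxr
        | (rcases starFun_cases f1 f2 ε x (hε x) with ⟨e3, e4⟩ | ⟨e3, e4⟩ | ⟨e3, e4⟩ <;> omega)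

lemma starrel_wit {g T : P → ℤ} {k : ℤ} (hpt : ∀ x, g x = T x + k)
    (hT0 : ∀ x, 0 ≤ T x) (hT0' : ∃ x, T x = 0) :
    ∃ m, IsLeast (Set.range g) m ∧ ∀ x, T x = g x - m := by
  refine ⟨k, ⟨?_, ?_⟩, fun x => by have := hpt x; omega⟩
  · obtain ⟨x, hx⟩ := hT0'
    exact ⟨x, by have := hpt x; omega⟩
  · rintro y ⟨z, rfl⟩; have := hpt z; have := hT0 z; omega

lemma starRel_self (f : P → ℤ) (h0 : ∀ x, 0 ≤ f x) (h0' : ∃ x, f x = 0) :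
    StarRel f f f := by
  constructor
  · exact ⟨0, by simp, fun x => by simp⟩
  · intro ε hε hval
    simp only [Set.mem_insert_iff, Set.mem_singleton_iff] at hε
    rcases hε with rfl | rfl | rfl
    · exact starrel_wit (k := 1)
        (fun x => by rcases starFun_cases f f (-1) x (hval x) with ⟨e1, e2⟩ | ⟨e1, e2⟩ | ⟨e1, e2⟩ <;> omega)
        h0 h0'
    · exact starrel_wit (k := -1)
        (fun x => by rcases starFun_cases f f 0 x (hval x) with ⟨e1, e2⟩ | ⟨e1, e2⟩ | ⟨e1, e2⟩ <;> omega)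
        h0 h0'
    · exact starrel_wit (k := 0)
        (fun x => by rcases starFun_cases f f 1 x (hval x) with ⟨e1, e2⟩ | ⟨e1, e2⟩ | ⟨e1, e2⟩ <;> omega)
        h0 h0'

end StarAux

open StarAux in
/-- Let `N` be a near polygon with exactly three points on every
line, `f1, f2` neighboring valuations of `N` and `f3 = f1 * f2`.  Then
(i) `f2 * f1 = f1 * f2 = f3`; (ii) `f1, f3` are neighboring valuations with
`f1 * f3 = f2`; (iii) `f2, f3` are neighboring valuations with `f2 * f3 = f1`;
moreover if `f1 = f2` then `f3 = f1 = f2` (regardless of the choice of `ε`,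
which is already built into `StarRel`). -/
theorem star_properties {P : Type*} {d : ℕ} (N : NearPolygon P d)
    (h3 : ∀ L ∈ N.Lines, L.ncard = 3)
    (f1 f2 f3 : P → ℤ)
    (hf1 : IsValuation N.Lines f1) (hf2 : IsValuation N.Lines f2)
    (hn : Neighboring f1 f2) (hstar : StarRel f1 f2 f3) :
    StarRel f2 f1 f3 ∧
      (Neighboring f1 f3 ∧ IsValuation N.Lines f3 ∧ StarRel f1 f3 f2) ∧
      (Neighboring f2 f3 ∧ StarRel f2 f3 f1) ∧
      (f1 = f2 → f3 = f1) := by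
  obtain ⟨⟨ε0, hε0mem, hε0⟩, hall⟩ := hstar
  obtain ⟨m, hm_least, hf3eq⟩ := hall ε0 hε0mem hε0
  have hε0m := hε0mem
  simp only [Set.mem_insert_iff, Set.mem_singleton_iff] at hε0m
  have hε0b : -1 ≤ ε0 ∧ ε0 ≤ 1 := by rcases hε0m with rfl | rfl | rfl <;> norm_num
  have tri := fun x => starFun_cases f1 f2 ε0 x (hε0 x)
  obtain ⟨hs1, hpos1, hzero1⟩ := hf1
  obtain ⟨hs2, hpos2, hzero2⟩ := hf2
  by_cases hc : f1 = f2
  · -- equal case: f3 = f1 = f2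
    obtain ⟨t, hpt⟩ : ∃ t, ∀ x, starFun f1 f2 ε0 x = f1 x + t := by
      rcases hε0m with rfl | rfl | rfl
      · exact ⟨1, fun x => by have hx := congrFun hc x
                              rcases tri x with ⟨e1, e2⟩ | ⟨e1, e2⟩ | ⟨e1, e2⟩ <;> omega⟩
      · exact ⟨-1, fun x => by have hx := congrFun hc x
                               rcases tri x with ⟨e1, e2⟩ | ⟨e1, e2⟩ | ⟨e1, e2⟩ <;> omega⟩
      · exact ⟨0, fun x => by have hx := congrFun hc x
                              rcases tri x with ⟨e1, e2⟩ | ⟨e1, e2⟩ | ⟨e1, e2⟩ <;> omega⟩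
    have hL0 : IsLeast (Set.range (starFun f1 f2 ε0)) t := by
      constructor
      · obtain ⟨x, hx⟩ := hzero1
        exact ⟨x, by have := hpt x; omega⟩
      · rintro y ⟨z, rfl⟩
        have := hpt z; have := hpos1 z; omega
    have hmt : m = t := hm_least.unique hL0
    have hf3 : f3 = f1 := funext fun x => by
      have := hf3eq x; have := hpt x; omega
    rw [hf3, ← hc]
    exact ⟨starRel_self f1 hpos1 hzero1,
      ⟨⟨0, fun x => by simp⟩, ⟨hs1, hpos1, hzero1⟩, starRel_self f1 hpos1 hzero1⟩,
      ⟨⟨0, fun x => by simp⟩, starRel_self f1 hpos1 hzero1⟩,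
      fun _ => rfl⟩
  · -- f1 ≠ f2 : the compatible ε is unique for each pair
    have hne12 : ∀ ε' : ℤ, (∀ x, |f1 x - f2 x + ε'| ≤ 1) → ε' = ε0 := by
      intro ε' hε'
      by_contra hne
      exact hc (eq_of_diff_const hpos1 hzero1 hpos2 hzero2
        (diff_const_of_two_eps N.connected hs1 hs2 hne hε' hε0))
    have hs3' : IsSemiValuation N.Lines (starFun f1 f2 ε0) := starFun_semival h3 hs1 hs2 hε0
    have hsv3 : IsSemiValuation N.Lines f3 := semival_congr_shift hs3' hf3eq
    have hf3pos : ∀ x, 0 ≤ f3 x := fun x => by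
      have := hm_least.2 (Set.mem_range_self x); have := hf3eq x; omega
    have hf3zero : ∃ x, f3 x = 0 := by
      obtain ⟨x, hx⟩ := hm_least.1
      exact ⟨x, by have := hf3eq x; omega⟩
    obtain ⟨xm, hxm⟩ := id hm_least.1
    obtain ⟨x1, hx1⟩ := id hzero1
    obtain ⟨x2, hx2⟩ := id hzero2
    have hmlb1 : -1 ≤ m := by
      rcases tri xm with ⟨e1, e2⟩ | ⟨e1, e2⟩ | ⟨e1, e2⟩ <;> (have := hpos1 xm; omega)
    have hmub1 : m ≤ 1 := by
      have hle := hm_least.2 (Set.mem_range_self x1)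
      rcases tri x1 with ⟨e1, e2⟩ | ⟨e1, e2⟩ | ⟨e1, e2⟩ <;> omega
    have hmlb2 : -1 - ε0 ≤ m := by
      rcases tri xm with ⟨e1, e2⟩ | ⟨e1, e2⟩ | ⟨e1, e2⟩ <;> (have := hpos2 xm; omega)
    have hmub2 : m ≤ 1 - ε0 := by
      have hle := hm_least.2 (Set.mem_range_self x2)
      rcases tri x2 with ⟨e1, e2⟩ | ⟨e1, e2⟩ | ⟨e1, e2⟩ <;> omega
    have hn13 : ∀ x, |f1 x - f3 x + (-m)| ≤ 1 := fun x => by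
      have := hf3eq x; rw [abs_le]
      rcases tri x with ⟨e1, e2⟩ | ⟨e1, e2⟩ | ⟨e1, e2⟩ <;> omega
    have hn23 : ∀ x, |f2 x - f3 x + (-ε0 - m)| ≤ 1 := fun x => by
      have := hf3eq x; rw [abs_le]
      rcases tri x with ⟨e1, e2⟩ | ⟨e1, e2⟩ | ⟨e1, e2⟩ <;> omega
    have hne13 : ∀ ε' : ℤ, (∀ x, |f1 x - f3 x + ε'| ≤ 1) → ε' = -m := by
      intro ε' hε'
      by_contra hne
      have hconst := diff_const_of_two_eps N.connected hs1 hsv3 hne hε' hn13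
      apply hc
      apply eq_of_diff_const hpos1 hzero1 hpos2 hzero2
      intro x y
      have hxy := hconst x y
      have := hf3eq x; have := hf3eq y
      rcases tri x with ⟨e1, e2⟩ | ⟨e1, e2⟩ | ⟨e1, e2⟩ <;>
        rcases tri y with ⟨e3, e4⟩ | ⟨e3, e4⟩ | ⟨e3, e4⟩ <;> omega
    have hne23 : ∀ ε' : ℤ, (∀ x, |f2 x - f3 x + ε'| ≤ 1) → ε' = -ε0 - m := by
      intro ε' hε'
      by_contra hne
      have hconst := diff_const_of_two_eps N.connected hs2 hsv3 hne hε' hn23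
      apply hc
      apply eq_of_diff_const hpos1 hzero1 hpos2 hzero2
      intro x y
      have hxy := hconst x y
      have := hf3eq x; have := hf3eq y
      rcases tri x with ⟨e1, e2⟩ | ⟨e1, e2⟩ | ⟨e1, e2⟩ <;>
        rcases tri y with ⟨e3, e4⟩ | ⟨e3, e4⟩ | ⟨e3, e4⟩ <;> omega
    refine ⟨?_, ⟨⟨-m, hn13⟩, ⟨hsv3, hf3pos, hf3zero⟩, ?_⟩,
      ⟨⟨-ε0 - m, hn23⟩, ?_⟩, fun h => absurd h hc⟩
    · -- StarRel f2 f1 f3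
      constructor
      · refine ⟨-ε0, ?_, fun x => by have := hε0 x; rw [abs_le] at *; omega⟩
        simp only [Set.mem_insert_iff, Set.mem_singleton_iff]; omega
      · intro ε' hmem hvalid
        have hε'eq : ε' = -ε0 := by
          have := hne12 (-ε') (fun x => by have := hvalid x; rw [abs_le] at *; omega)
          omega
        subst hε'eq
        refine starrel_wit (k := m + ε0) ?_ hf3pos hf3zero
        intro x
        have hv2 : |f2 x - f1 x + (-ε0)| ≤ 1 := by have := hε0 x; rw [abs_le] at *; omega
        have := hf3eq x
        rcases starFun_cases f2 f1 (-ε0) x hv2 with ⟨e1, e2⟩ | ⟨e1, e2⟩ | ⟨e1, e2⟩ <;>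
          rcases tri x with ⟨e3, e4⟩ | ⟨e3, e4⟩ | ⟨e3, e4⟩ <;> omega
    · -- StarRel f1 f3 f2
      constructor
      · refine ⟨-m, ?_, hn13⟩
        simp only [Set.mem_insert_iff, Set.mem_singleton_iff]; omega
      · intro ε' hmem hvalid
        have hε'eq := hne13 ε' hvalid
        subst hε'eq
        refine starrel_wit (k := -ε0) ?_ hpos2 hzero2
        intro x
        have := hf3eq x
        rcases starFun_cases f1 f3 (-m) x (hn13 x) with ⟨e1, e2⟩ | ⟨e1, e2⟩ | ⟨e1, e2⟩ <;>
          rcases tri x with ⟨e3, e4⟩ | ⟨e3, e4⟩ | ⟨e3, e4⟩ <;> omega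
    · -- StarRel f2 f3 f1
      constructor
      · refine ⟨-ε0 - m, ?_, hn23⟩
        simp only [Set.mem_insert_iff, Set.mem_singleton_iff]; omega
      · intro ε' hmem hvalid
        have hε'eq := hne23 ε' hvalid
        subst hε'eq
        refine starrel_wit (k := ε0) ?_ hpos1 hzero1
        intro x
        have := hf3eq x
        rcases starFun_cases f2 f3 (-ε0 - m) x (hn23 x) with ⟨e1, e2⟩ | ⟨e1, e2⟩ | ⟨e1, e2⟩ <;>
          rcases tri x with ⟨e3, e4⟩ | ⟨e3, e4⟩ | ⟨e3, e4⟩ <;> omega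
end

section
/- Let N = (P, L) be a finite near 2d-gon of order (s,t) with d ≥ 1, and let x be a point of N. Then the sum over all points y ∈ P of (−1/s)^{d(x,y)}, computed in ℚ, equals 0. -/
/-- Let `N` be a finite near `2d`-gon of order `(s,t)` with
`d ≥ 1` and let `x` be a point of `N`.  Then
`∑_{y ∈ P} (-1/s)^{d(x,y)} = 0` in `ℚ`. -/
theorem near_polygon_sum_zero {P : Type*} [Fintype P] {d s t : ℕ} (hd : 1 ≤ d)
    (N : NearPolygon P d) (hord : N.hasOrder s t) (x : P) :
    ∑ y : P, (-1 / (s : ℚ)) ^ ((collGraph N.Lines).dist x y) = 0 := by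
  classical
  set G := collGraph N.Lines with hG
  set w : P → ℚ := fun y => (-1 / (s : ℚ)) ^ (G.dist x y) with hw
  -- a line exists
  obtain ⟨a, b, hab⟩ := N.diam_eq
  have hane : a ≠ b := by
    intro h; subst h; rw [SimpleGraph.dist_self] at hab; omega
  obtain ⟨p⟩ := (N.connected a b)
  have hnil : ¬ p.Nil := SimpleGraph.Walk.not_nil_of_ne hane
  have hadj : G.Adj a (p.getVert 1) := (p.firstDart hnil).adj
  obtain ⟨hne, L0, hL0, _, _⟩ := hadj
  -- s ≥ 1
  have hs : 1 ≤ s := by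
    by_contra h
    push_neg at h
    interval_cases s
    obtain ⟨u, hu, v, hv, huv⟩ := N.two_pts L0 hL0
    have h1 : L0.ncard = 0 + 1 := hord.1 L0 hL0
    have hfin : L0.Finite := Set.toFinite _
    rw [Set.ncard_eq_one] at h1
    obtain ⟨c, hc⟩ := h1
    rw [hc] at hu hv
    simp_all
  have hsQ : (s : ℚ) ≠ 0 := by exact Nat.cast_ne_zero.mpr (by omega)
  -- each line sums to zero
  have hline : ∀ L ∈ N.Lines, ∑ y ∈ L.toFinset, w y = 0 := by
    intro L hL
    obtain ⟨y0, ⟨hy0L, hy0min⟩, hy0uniq⟩ := N.near x L hL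
    have hdists : ∀ z ∈ L, z ≠ y0 → G.dist x z = G.dist x y0 + 1 := by
      intro z hz hzne
      have hle : G.dist x z ≤ G.dist x y0 + 1 := by
        have hadjz : G.Adj y0 z := ⟨fun h => hzne h.symm, L, hL, hy0L, hz⟩
        have := N.connected.dist_triangle (u := x) (v := y0) (w := z)
        rwa [SimpleGraph.dist_eq_one_iff_adj.mpr hadjz] at this
      have hge : G.dist x y0 ≤ G.dist x z := hy0min z hz
      rcases Nat.lt_or_ge (G.dist x z) (G.dist x y0 + 1) with h | h
      · -- then dist x z = dist x y0, so z is also nearest: contradiction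
        have heq : G.dist x z = G.dist x y0 := le_antisymm (by omega) hge
        have : z = y0 := hy0uniq z ⟨hz, fun u hu => heq ▸ hy0min u hu⟩
        exact absurd this hzne
      · omega
    have hcard : L.toFinset.card = s + 1 := by
      rw [← Set.ncard_eq_toFinset_card']
      exact hord.1 L hL
    have hy0' : y0 ∈ L.toFinset := Set.mem_toFinset.mpr hy0L
    rw [← Finset.add_sum_erase _ _ hy0']
    have hrest : ∀ z ∈ L.toFinset.erase y0, w z = w y0 * (-1 / (s : ℚ)) := by
      intro z hz
      obtain ⟨hzne, hzL⟩ := Finset.mem_erase.mp hz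
      rw [hw]
      simp only
      rw [hdists z (Set.mem_toFinset.mp hzL) hzne, pow_succ]
    rw [Finset.sum_congr rfl hrest, Finset.sum_const,
      Finset.card_erase_of_mem hy0', hcard]
    simp only [Nat.add_sub_cancel]
    rw [nsmul_eq_mul]
    field_simp
    ring
  -- double counting
  have hdouble : ∑ L ∈ N.Lines.toFinset, ∑ y ∈ (Set.toFinset L), w y
      = (t + 1 : ℚ) * ∑ y : P, w y := by
    have : ∀ L : Set P, ∑ y ∈ Set.toFinset L, w y
        = ∑ y : P, if y ∈ L then w y else 0 := by
      intro L
      rw [← Finset.sum_filter]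
      congr 1
      ext y; simp [Set.mem_toFinset]
    simp_rw [this]
    rw [Finset.sum_comm]
    rw [Finset.mul_sum]
    congr 1
    ext y
    rw [← Finset.sum_filter]
    have hfil : (N.Lines.toFinset.filter (fun L => y ∈ L))
        = {L | L ∈ N.Lines ∧ y ∈ L}.toFinset := by
      ext L; simp [Set.mem_toFinset]
    rw [Finset.sum_const, hfil, ← Set.ncard_eq_toFinset_card', hord.2 y]
    ring
  have hzero : ∑ L ∈ N.Lines.toFinset, ∑ y ∈ (Set.toFinset L), w y = 0 :=
    Finset.sum_eq_zero fun L hL => hline L (Set.mem_toFinset.mp hL)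
  rw [hzero] at hdouble
  have ht1 : (t + 1 : ℚ) ≠ 0 := by positivity
  have := (mul_eq_zero.mp hdouble.symm).resolve_left ht1
  simpa [hw] using this
end

section
/- Let N be a near hexagon of order (2,2) with v points in total. Then for every point x of N, the number of points at distance 2 from x equals (v + 9)/3 and the number of points at distance 3 from x equals (2v − 30)/3. -/
open SimpleGraph in
private lemma near_struct' {P : Type*} {d : ℕ} (N : NearPolygon P d) (x : P) {L : Set P}
    (hL : L ∈ N.Lines) :
    ∃ y ∈ L, ∀ z ∈ L, z ≠ y →
      (collGraph N.Lines).dist x z = (collGraph N.Lines).dist x y + 1 := by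
  obtain ⟨y, ⟨hyL, hymin⟩, huniq⟩ := N.near x L hL
  refine ⟨y, hyL, fun z hz hzy => ?_⟩
  have h1 : (collGraph N.Lines).dist x y ≤ (collGraph N.Lines).dist x z := hymin z hz
  have hadj : (collGraph N.Lines).Adj y z := ⟨Ne.symm hzy, L, hL, hyL, hz⟩
  have hd1 : (collGraph N.Lines).dist y z = 1 := dist_eq_one_iff_adj.2 hadj
  have h2 : (collGraph N.Lines).dist x z ≤ (collGraph N.Lines).dist x y + 1 := by
    have := N.connected.dist_triangle (u := x) (v := y) (w := z)
    omega
  have h3 : (collGraph N.Lines).dist x z ≠ (collGraph N.Lines).dist x y := by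
    intro he
    exact hzy (huniq z ⟨hz, fun w hw => he ▸ hymin w hw⟩)
  omega

open SimpleGraph in
private lemma near_finite' {P : Type*} {d : ℕ} (N : NearPolygon P d) {s t : ℕ}
    (hord : N.hasOrder s t) : Finite P := by
  classical
  obtain ⟨x⟩ := N.connected.nonempty
  have hLfin : ∀ L ∈ N.Lines, L.Finite := fun L hL =>
    Set.finite_of_ncard_ne_zero (by rw [hord.1 L hL]; omega)
  have hLzfin : ∀ z : P, {L | L ∈ N.Lines ∧ z ∈ L}.Finite := fun z =>
    Set.finite_of_ncard_ne_zero (by rw [hord.2 z]; omega)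
  have hNfin : ∀ z : P, ((collGraph N.Lines).neighborSet z).Finite := by
    intro z
    refine ((hLzfin z).biUnion fun L hL => hLfin L hL.1).subset ?_
    rintro y ⟨hne, L, hL, hzL, hyL⟩
    exact Set.mem_biUnion (⟨hL, hzL⟩ : L ∈ {L | L ∈ N.Lines ∧ z ∈ L}) hyL
  have hball : ∀ k : ℕ, {y : P | (collGraph N.Lines).dist x y ≤ k}.Finite := by
    intro k
    induction k with
    | zero =>
      refine (Set.finite_singleton x).subset fun y hy => ?_
      simp only [Set.mem_setOf_eq, Nat.le_zero] at hy
      have := (N.connected.dist_eq_zero_iff (u := x) (v := y)).1 hy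
      simp [← this]
    | succ k ih =>
      refine (ih.union ((ih.biUnion fun z _ => hNfin z))).subset ?_
      intro y hy
      simp only [Set.mem_setOf_eq] at hy
      rcases Nat.lt_or_ge ((collGraph N.Lines).dist x y) (k+1) with h | h
      · exact Or.inl (Nat.lt_succ_iff.1 h)
      · have hd : (collGraph N.Lines).dist x y = k + 1 := le_antisymm hy h
        obtain ⟨p, hp⟩ := N.connected.exists_walk_length_eq_dist x y
        have hp' : p.reverse.length = k + 1 := by
          rw [SimpleGraph.Walk.length_reverse, hp, hd]
        cases hq : p.reverse with
        | nil => rw [hq] at hp'; simp at hp'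
        | cons h' q =>
          rename_i b
          rw [hq] at hp'
          simp only [SimpleGraph.Walk.length_cons] at hp'
          have hdb : (collGraph N.Lines).dist x b ≤ k := by
            rw [SimpleGraph.dist_comm]
            calc (collGraph N.Lines).dist b x ≤ q.length := SimpleGraph.dist_le q
            _ = k := by omega
          exact Or.inr (Set.mem_biUnion hdb h'.symm)
  have : (Set.univ : Set P).Finite := (hball d).subset fun y _ => N.diam_le x y
  exact Set.finite_univ_iff.1 this

/-- Let `N` be a near hexagon of order `(2,2)` with `v` points
in total.  Then for every point `x`, the number of points at distance `2`
from `x` equals `(v+9)/3` and the number of points at distance `3` from `x`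
equals `(2v-30)/3`. -/
theorem near_hexagon_point_counts {P : Type*} (N : NearPolygon P 3)
    (hord : N.hasOrder 2 2) (x : P) :
    3 * {y : P | (collGraph N.Lines).dist x y = 2}.ncard = Nat.card P + 9 ∧
      3 * {y : P | (collGraph N.Lines).dist x y = 3}.ncard + 30 = 2 * Nat.card P := by
  classical
  obtain ⟨hline3, hpt3⟩ := hord
  have hfin : Finite P := near_finite' N ⟨hline3, hpt3⟩
  cases nonempty_fintype P
  have hconn := N.connected
  -- the nearest-point function on lines
  have key : ∀ L : Set P, ∃ y, L ∈ N.Lines → (y ∈ L ∧ ∀ z ∈ L, z ≠ y →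
      (collGraph N.Lines).dist x z = (collGraph N.Lines).dist x y + 1) := by
    intro L
    by_cases hL : L ∈ N.Lines
    · obtain ⟨y, hy, h⟩ := near_struct' N x hL
      exact ⟨y, fun _ => ⟨hy, h⟩⟩
    · exact ⟨x, fun h => absurd h hL⟩
  choose nst hnst using key
  have hnst1 : ∀ L ∈ N.Lines, nst L ∈ L := fun L hL => (hnst L hL).1
  have hnst2 : ∀ L ∈ N.Lines, ∀ z ∈ L, z ≠ nst L →
      (collGraph N.Lines).dist x z = (collGraph N.Lines).dist x (nst L) + 1 :=
    fun L hL => (hnst L hL).2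
  -- distance spheres as finsets
  set Γ : ℕ → Finset P := fun i => Finset.univ.filter fun y => (collGraph N.Lines).dist x y = i
    with hΓdef
  have hΓ : ∀ i (y : P), y ∈ Γ i ↔ (collGraph N.Lines).dist x y = i := by
    intro i y; rw [hΓdef]; simp
  -- the finset of lines
  set LF : Finset (Set P) := (Set.toFinite N.Lines).toFinset with hLFdef
  have hmemLF : ∀ L : Set P, L ∈ LF ↔ L ∈ N.Lines := by
    intro L; rw [hLFdef]; exact Set.Finite.mem_toFinset _
  -- cardinality of a line as a finset
  have hlinecard : ∀ L ∈ N.Lines, (Set.toFinite L).toFinset.card = 3 := by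
    intro L hL
    rw [← Set.ncard_eq_toFinset_card]
    exact hline3 L hL
  -- per-line point count at each distance
  have hcnt : ∀ L ∈ N.Lines, ∀ i : ℕ, ((Γ i).filter fun z => z ∈ L).card
      = if i = (collGraph N.Lines).dist x (nst L) then 1
        else if i = (collGraph N.Lines).dist x (nst L) + 1 then 2 else 0 := by
    intro L hL i
    have hy := hnst1 L hL
    have h2 := hnst2 L hL
    by_cases h0 : i = (collGraph N.Lines).dist x (nst L)
    · rw [if_pos h0]
      have hset : (Γ i).filter (fun z => z ∈ L) = {nst L} := by
        ext z
        simp only [Finset.mem_filter, Finset.mem_singleton, hΓ]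
        constructor
        · rintro ⟨hdz, hzL⟩
          by_contra hne
          have := h2 z hzL hne
          omega
        · rintro rfl
          exact ⟨h0.symm, hy⟩
      rw [hset, Finset.card_singleton]
    · rw [if_neg h0]
      by_cases h1 : i = (collGraph N.Lines).dist x (nst L) + 1
      · rw [if_pos h1]
        have hset : (Γ i).filter (fun z => z ∈ L) = (Set.toFinite L).toFinset.erase (nst L) := by
          ext z
          simp only [Finset.mem_filter, Finset.mem_erase, Set.Finite.mem_toFinset, hΓ]
          constructor
          · rintro ⟨hdz, hzL⟩
            refine ⟨fun he => h0 ?_, hzL⟩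
            rw [← hdz, he]
          · rintro ⟨hzne, hzL⟩
            exact ⟨by rw [h2 z hzL hzne, h1], hzL⟩
        rw [hset, Finset.card_erase_of_mem (by rwa [Set.Finite.mem_toFinset]), hlinecard L hL]
      · rw [if_neg h1]
        have hset : (Γ i).filter (fun z => z ∈ L) = ∅ := by
          ext z
          simp only [Finset.mem_filter, Finset.notMem_empty, iff_false, hΓ, not_and]
          intro hdz hzL
          by_cases hze : z = nst L
          · exact h0 (by rw [← hdz, hze])
          · exact h1 (by rw [← hdz, h2 z hzL hze])
        rw [hset, Finset.card_empty]
  -- double counting of flags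
  have flagcount : ∀ s : Finset P,
      (∑ L ∈ LF, ((s.filter fun z => z ∈ L).card)) = 3 * s.card := by
    intro s
    calc ∑ L ∈ LF, (s.filter fun z => z ∈ L).card
        = ∑ L ∈ LF, ∑ z ∈ s, if z ∈ L then 1 else 0 :=
          Finset.sum_congr rfl fun L _ => Finset.card_filter _ _
      _ = ∑ z ∈ s, ∑ L ∈ LF, if z ∈ L then 1 else 0 := Finset.sum_comm
      _ = ∑ z ∈ s, 3 := by
          refine Finset.sum_congr rfl fun z _ => ?_
          rw [← Finset.card_filter]
          have hset : LF.filter (fun L => z ∈ L)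
              = (Set.toFinite {L | L ∈ N.Lines ∧ z ∈ L}).toFinset := by
            ext L
            simp only [Finset.mem_filter, Set.Finite.mem_toFinset, Set.mem_setOf_eq, hmemLF]
          rw [hset, ← Set.ncard_eq_toFinset_card, hpt3 z]
      _ = 3 * s.card := by rw [Finset.sum_const, smul_eq_mul, mul_comm]
  -- bound on the minimal distance of a line
  have hmu_le : ∀ L ∈ N.Lines, (collGraph N.Lines).dist x (nst L) ≤ 2 := by
    intro L hL
    by_contra h
    obtain ⟨a, ha, b, hb, hab⟩ := N.two_pts L hL
    have hz : ∃ z ∈ L, z ≠ nst L := by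
      by_cases h1 : a = nst L
      · exact ⟨b, hb, by rw [← h1]; exact hab.symm⟩
      · exact ⟨a, ha, h1⟩
    obtain ⟨z, hz1, hz2⟩ := hz
    have hzz := hnst2 L hL z hz1 hz2
    have := N.diam_le x z
    omega
  -- lines through x as a finset
  have hLxcard : (LF.filter (fun L => x ∈ L)).card = 3 := by
    have hset : LF.filter (fun L => x ∈ L)
        = (Set.toFinite {L | L ∈ N.Lines ∧ x ∈ L}).toFinset := by
      ext L
      simp only [Finset.mem_filter, Set.Finite.mem_toFinset, Set.mem_setOf_eq, hmemLF]
    rw [hset, ← Set.ncard_eq_toFinset_card, hpt3 x]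
  -- the three classes of lines
  set l0 : ℕ := (LF.filter (fun L => (collGraph N.Lines).dist x (nst L) = 0)).card with hl0def
  set l1 : ℕ := (LF.filter (fun L => (collGraph N.Lines).dist x (nst L) = 1)).card with hl1def
  set l2 : ℕ := (LF.filter (fun L => (collGraph N.Lines).dist x (nst L) = 2)).card with hl2def
  -- l0 = 3
  have hiff : ∀ L ∈ N.Lines, ((collGraph N.Lines).dist x (nst L) = 0 ↔ x ∈ L) := by
    intro L hL
    constructor
    · intro h
      have hx : x = nst L := (hconn.dist_eq_zero_iff).1 h
      rw [hx]
      exact hnst1 L hL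
    · intro hx
      by_contra h
      have hne : x ≠ nst L := by
        intro he
        apply h
        rw [← he, SimpleGraph.dist_self]
      have h1 := hnst2 L hL x hx hne
      rw [SimpleGraph.dist_self] at h1
      omega
  have hl0 : l0 = 3 := by
    have hset : LF.filter (fun L => (collGraph N.Lines).dist x (nst L) = 0)
        = LF.filter (fun L => x ∈ L) := by
      ext L
      simp only [Finset.mem_filter]
      exact and_congr_right fun hLF => hiff L ((hmemLF L).1 hLF)
    rw [hl0def, hset, hLxcard]
  -- splitting the sum over lines into the three classes
  have hsplit : ∀ g : Set P → ℕ, ∑ L ∈ LF, g L =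
      (∑ L ∈ LF.filter (fun L => (collGraph N.Lines).dist x (nst L) = 0), g L) +
      ((∑ L ∈ LF.filter (fun L => (collGraph N.Lines).dist x (nst L) = 1), g L) +
      (∑ L ∈ LF.filter (fun L => (collGraph N.Lines).dist x (nst L) = 2), g L)) := by
    intro g
    rw [← Finset.sum_filter_add_sum_filter_not LF
      (fun L => (collGraph N.Lines).dist x (nst L) = 0) g]
    congr 1
    rw [← Finset.sum_filter_add_sum_filter_not
      (LF.filter fun L => ¬ (collGraph N.Lines).dist x (nst L) = 0)
      (fun L => (collGraph N.Lines).dist x (nst L) = 1) g]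
    congr 1
    · congr 1
      rw [Finset.filter_filter]
      ext L
      simp only [Finset.mem_filter]
      constructor
      · rintro ⟨hLF, -, h1⟩
        exact ⟨hLF, h1⟩
      · rintro ⟨hLF, h1⟩
        exact ⟨hLF, by omega, h1⟩
    · congr 1
      rw [Finset.filter_filter]
      ext L
      simp only [Finset.mem_filter]
      constructor
      · rintro ⟨hLF, h0, h1⟩
        have := hmu_le L ((hmemLF L).1 hLF)
        exact ⟨hLF, by omega⟩
      · rintro ⟨hLF, h2⟩
        exact ⟨hLF, by omega, by omega⟩
  -- constant sums over each class
  have hsum : ∀ m i : ℕ, (∑ L ∈ LF.filter (fun L => (collGraph N.Lines).dist x (nst L) = m),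
      ((Γ i).filter fun z => z ∈ L).card)
      = (LF.filter (fun L => (collGraph N.Lines).dist x (nst L) = m)).card *
        (if i = m then 1 else if i = m + 1 then 2 else 0) := by
    intro m i
    have h : ∀ L ∈ LF.filter (fun L => (collGraph N.Lines).dist x (nst L) = m),
        ((Γ i).filter fun z => z ∈ L).card
          = (if i = m then 1 else if i = m + 1 then 2 else 0) := by
      intro L hLm
      obtain ⟨hLF, hm⟩ := Finset.mem_filter.1 hLm
      rw [hcnt L ((hmemLF L).1 hLF) i, hm]
    rw [Finset.sum_congr rfl h, Finset.sum_const, smul_eq_mul]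
  -- the three flag equations
  have E : ∀ i : ℕ, 3 * (Γ i).card =
      l0 * (if i = 0 then 1 else if i = 0 + 1 then 2 else 0) +
      (l1 * (if i = 1 then 1 else if i = 1 + 1 then 2 else 0) +
      l2 * (if i = 2 then 1 else if i = 2 + 1 then 2 else 0)) := by
    intro i
    rw [← flagcount (Γ i), hsplit (fun L => ((Γ i).filter fun z => z ∈ L).card),
      hsum 0 i, hsum 1 i, hsum 2 i]
  have E1 : 3 * (Γ 1).card = l0 * 2 + l1 := by
    have := E 1
    norm_num at this
    omega
  have E2 : 3 * (Γ 2).card = l1 * 2 + l2 := by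
    have := E 2
    norm_num at this
    omega
  have E3 : 3 * (Γ 3).card = l2 * 2 := by
    have := E 3
    norm_num at this
    omega
  -- number of lines equals number of points
  have hLFv : 3 * LF.card = 3 * Fintype.card P := by
    have h := flagcount Finset.univ
    have h2 : ∀ L ∈ LF, (Finset.univ.filter fun z => z ∈ L).card = 3 := by
      intro L hLF
      have hset : Finset.univ.filter (fun z => z ∈ L) = (Set.toFinite L).toFinset := by
        ext z
        simp only [Finset.mem_filter, Finset.mem_univ, true_and, Set.Finite.mem_toFinset]
      rw [hset]
      exact hlinecard L ((hmemLF L).1 hLF)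
    rw [Finset.sum_congr rfl h2, Finset.sum_const, smul_eq_mul, mul_comm,
      Finset.card_univ] at h
    exact h
  have hLFsum : LF.card = l0 + (l1 + l2) := by
    have h := hsplit (fun _ => 1)
    simp only [Finset.sum_const, smul_eq_mul, mul_one] at h
    exact h
  -- Γ 1 has six points
  have hG1 : (Γ 1).card = 6 := by
    have hU : Γ 1 = (LF.filter (fun L => x ∈ L)).biUnion
        (fun L => ((Set.toFinite L).toFinset).erase x) := by
      ext y
      simp only [Finset.mem_biUnion, Finset.mem_filter, Finset.mem_erase,
        Set.Finite.mem_toFinset, hΓ]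
      constructor
      · intro hy
        have hadj : (collGraph N.Lines).Adj x y := SimpleGraph.dist_eq_one_iff_adj.1 hy
        obtain ⟨hne, L, hL, hxL, hyL⟩ := hadj
        exact ⟨L, ⟨(hmemLF L).2 hL, hxL⟩, Ne.symm hne, hyL⟩
      · rintro ⟨L, ⟨hLF, hxL⟩, hyx, hyL⟩
        exact SimpleGraph.dist_eq_one_iff_adj.2 ⟨Ne.symm hyx, L, (hmemLF L).1 hLF, hxL, hyL⟩
    rw [hU, Finset.card_biUnion]
    · have h2 : ∀ L ∈ LF.filter (fun L => x ∈ L),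
          (((Set.toFinite L).toFinset).erase x).card = 2 := by
        intro L hLf
        obtain ⟨hLF, hxL⟩ := Finset.mem_filter.1 hLf
        rw [Finset.card_erase_of_mem (by rwa [Set.Finite.mem_toFinset]),
          hlinecard L ((hmemLF L).1 hLF)]
      rw [Finset.sum_congr rfl h2, Finset.sum_const, hLxcard]
      norm_num
    · intro L1 h1 L2 h2 hne
      obtain ⟨h1F, h1x⟩ := Finset.mem_filter.1 h1
      obtain ⟨h2F, h2x⟩ := Finset.mem_filter.1 h2
      rw [Function.onFun, Finset.disjoint_left]
      intro y hy1 hy2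
      rw [Finset.mem_erase, Set.Finite.mem_toFinset] at hy1 hy2
      exact hne (N.unique_line L1 ((hmemLF L1).1 h1F) L2 ((hmemLF L2).1 h2F) x y
        (Ne.symm hy1.1) h1x hy1.2 h2x hy2.2)
  -- translate the goal
  have hncard : ∀ i : ℕ, {y : P | (collGraph N.Lines).dist x y = i}.ncard = (Γ i).card := by
    intro i
    rw [← Set.ncard_coe_finset (Γ i)]
    congr 1
    ext y
    simp only [Set.mem_setOf_eq, Finset.coe_filter, hΓ, Finset.mem_coe]
  have hv : Nat.card P = Fintype.card P := Nat.card_eq_fintype_card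
  constructor
  · rw [hncard 2, hv]
    omega
  · rw [hncard 3, hv]
    omega
end
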